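/- Let k be a field of characteristic 3, let ε₀, φ₀ ∈ k with ε₀ ≠ 0 and φ₀ ≠ 0, and let φ₁, φ₂, φ₃, γ₁, γ₂, γ₃, γ₄, γ₅ ∈ k. Set b₂ = ε₀t, b₄ = t(φ₃t³ + φ₂t² + φ₁t + φ₀), b₆ = t(γ₅t⁵ + γ₄t⁴ + γ₃t³ + γ₂t² + γ₁t), and Δ = −b₂²(b₂b₆ − b₄²) + b₄³. Then for all α ∈ k with α ≠ 0 and all a, b, c ∈ k with a ≠ 0, b ≠ 0 and a ≠ b, one has Δ ≠ α·t³(t−a)⁴(t−b)⁴(t−c). (This shows the configurations III I₄ I₄ I₁ and III I₅ I₄, with the type III fibre over t = 0 and b₂ having distinct roots, do not exist on a rational elliptic surface in characteristic 3.) -/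
import Mathlib

set_option maxRecDepth 8000
set_option maxHeartbeats 1000000

open Polynomial

theorem stmt12 {k : Type*} [Field k] [CharP k 3]
    (ε₀ : k) (hε₀ : ε₀ ≠ 0) (φ₀ : k) (hφ₀ : φ₀ ≠ 0)
    (φ₁ φ₂ φ₃ γ₁ γ₂ γ₃ γ₄ γ₅ : k)
    (b₂ b₄ b₆ Δ : k[X])
    (hb₂ : b₂ = C ε₀ * X)
    (hb₄ : b₄ = X * (C φ₃ * X ^ 3 + C φ₂ * X ^ 2 + C φ₁ * X + C φ₀))
    (hb₆ : b₆ = X * (C γ₅ * X ^ 5 + C γ₄ * X ^ 4 + C γ₃ * X ^ 3 + C γ₂ * X ^ 2 + C γ₁ * X))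
    (hΔ : Δ = -b₂ ^ 2 * (b₂ * b₆ - b₄ ^ 2) + b₄ ^ 3) :
    ∀ α a b c : k, α ≠ 0 → a ≠ 0 → b ≠ 0 → a ≠ b →
      Δ ≠ C α * (X ^ 3 * (X - C a) ^ 4 * (X - C b) ^ 4 * (X - C c)) := by
  subst hb₂ hb₄ hb₆ hΔ
  intro α a b c hα ha hb hab h
  have hch : (3 : k) = 0 := CharP.cast_eq_zero k 3
  ring_nf at h
  have h12 := congrArg (fun p => coeff p 12) h
  have h11 := congrArg (fun p => coeff p 11) h
  have h10 := congrArg (fun p => coeff p 10) h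
  have h4 := congrArg (fun p => coeff p 4) h
  have h3 := congrArg (fun p => coeff p 3) h
  simp only [coeff_add, coeff_sub, ← C_pow, ← C_mul, coeff_C_mul, coeff_mul_C,
    coeff_neg, coeff_ofNat_mul, coeff_mul_ofNat, coeff_X_pow] at h12 h11 h10 h4 h3
  norm_num at h12 h11 h10 h4 h3
  subst h12
  have hp3 : φ₃ ≠ 0 := by intro h0; apply hα; rw [h0]; ring
  have hcc : φ₃ ^ 3 * (a + b + c) = 0 := by
    linear_combination h11 + (-(φ₂ * φ₃ ^ 2) - φ₃ ^ 3 * (a + b)) * hch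
  have hc : c = -a - b := by
    have h0 := (mul_eq_zero.mp hcc).resolve_left (pow_ne_zero 3 hp3)
    linear_combination h0
  subst hc
  have G10 : ε₀ ^ 2 * φ₃ ^ 2 = φ₃ ^ 3 * (a * b - (a + b) ^ 2) := by
    linear_combination h10 + (-(φ₂ ^ 2 * φ₃) - φ₁ * φ₃ ^ 2 + φ₃ ^ 3 * (a ^ 2 + 3 * a * b + b ^ 2)) * hch
  have G4 : ε₀ ^ 2 * φ₀ ^ 2 = φ₃ ^ 3 * (a * b) ^ 3 * (a * b - (a + b) ^ 2) := by
    linear_combination h4 + (-(φ₁ * φ₀ ^ 2) - φ₃ ^ 3 * a ^ 3 * b ^ 3 * (a + b) ^ 2) * hch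
  have G3 : φ₀ ^ 3 = φ₃ ^ 3 * (a * b) ^ 4 * (a + b) := by
    linear_combination h3
  have hA : φ₀ ^ 2 = (a * b) ^ 3 * φ₃ ^ 2 := by
    refine mul_left_cancel₀ (pow_ne_zero 2 hε₀) ?_
    linear_combination G4 - (a * b) ^ 3 * G10
  have hB : φ₀ = φ₃ * (a + b) ^ 3 := by
    refine mul_right_cancel₀ (pow_ne_zero 8 hφ₀) ?_
    linear_combination (φ₀ ^ 6 + φ₀ ^ 3 * (φ₃ ^ 3 * (a * b) ^ 4 * (a + b)) + (φ₃ ^ 3 * (a * b) ^ 4 * (a + b)) ^ 2) * G3 -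
      φ₃ * (a + b) ^ 3 * (φ₀ ^ 6 + φ₀ ^ 4 * (a * b) ^ 3 * φ₃ ^ 2 + φ₀ ^ 2 * (a * b) ^ 6 * φ₃ ^ 4 + (a * b) ^ 9 * φ₃ ^ 6) * hA
  have hE : ε₀ ^ 6 * φ₃ ^ 6 = 0 := by
    linear_combination (ε₀ ^ 4 * φ₃ ^ 4 + ε₀ ^ 2 * φ₃ ^ 2 * (φ₃ ^ 3 * (a * b - (a + b) ^ 2)) + (φ₃ ^ 3 * (a * b - (a + b) ^ 2)) ^ 2) * G10 -
      φ₃ ^ 7 * hA + φ₃ ^ 7 * (φ₀ + φ₃ * (a + b) ^ 3) * hB +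
      φ₃ ^ 9 * (a * b * (a + b) ^ 4 - (a * b) ^ 2 * (a + b) ^ 2) * hch
  exact mul_ne_zero (pow_ne_zero 6 hε₀) (pow_ne_zero 6 hp3) hE
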